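/- Let x₀ > 0, y₀ > 0, and let T > 0, c₀ > 0 satisfy |x₀| + |x₀ − y₀²| T ≤ c₀, |y₀| + |y₀ − x₀²| T ≤ c₀, |x₀| + c₀ T + c₀² T ≤ c₀, and |y₀| + c₀ T + c₀² T ≤ c₀. Then there exists a pair of continuously differentiable functions (x,y) : [0,T] → ℝ² with x(0) = x₀, y(0) = y₀, and for all t ∈ [0,T]: ẋ(t) = x(t) − max_{s∈[0,t]} y²(s) and ẏ(t) = y(t) − max_{s∈[0,t]} x²(s). -/

import Mathlib

open Set Metric MeasureTheory intervalIntegral Filter Topology Function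
open scoped Nat Interval

noncomputable section

namespace CoupledMaxAux

/-- clamp to `[-c, c]` -/
def cl (c a : ℝ) : ℝ := max (min a c) (-c)

lemma continuous_cl (c : ℝ) : Continuous (cl c) :=
  (continuous_id.min continuous_const).max continuous_const

lemma abs_cl_le {c : ℝ} (hc : 0 ≤ c) (a : ℝ) : |cl c a| ≤ c := by
  rw [abs_le]
  exact ⟨le_max_right _ _, max_le (min_le_right _ _) (by linarith)⟩

lemma cl_eq_of_abs_le {c a : ℝ} (h : |a| ≤ c) : cl c a = a := by
  rw [abs_le] at h
  rw [cl, min_eq_left h.2, max_eq_left h.1]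

lemma abs_cl_sub_cl_le (c a b : ℝ) : |cl c a - cl c b| ≤ |a - b| := by
  refine (abs_max_sub_max_le_abs _ _ _).trans ?_
  refine (abs_min_sub_min_le_max a c b c).trans ?_
  simp

lemma abs_cl_sq_sub_cl_sq {c : ℝ} (hc : 0 ≤ c) (a b : ℝ) :
    |cl c a ^ 2 - cl c b ^ 2| ≤ 2 * c * |a - b| := by
  have h1 := abs_le.1 (abs_cl_le hc a)
  have h2 := abs_le.1 (abs_cl_le hc b)
  have he : cl c a ^ 2 - cl c b ^ 2 = (cl c a + cl c b) * (cl c a - cl c b) := by ring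
  rw [he, abs_mul]
  have habs : |cl c a + cl c b| ≤ 2 * c := by
    rw [abs_le]; constructor <;> linarith
  exact mul_le_mul habs (abs_cl_sub_cl_le c a b) (abs_nonneg _) (by linarith)

lemma bddAbove_image_Icc {g : ℝ → ℝ} (hg : Continuous g) {a b : ℝ} :
    BddAbove (g '' Icc a b) := (isCompact_Icc.image hg).bddAbove

lemma runSup_le {g : ℝ → ℝ} {t b : ℝ} (ht : 0 ≤ t) (h : ∀ s ∈ Icc (0:ℝ) t, g s ≤ b) :
    sSup (g '' Icc 0 t) ≤ b :=
  csSup_le ((nonempty_Icc.2 ht).image g) (by rintro x ⟨s, hs, rfl⟩; exact h s hs)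

lemma le_runSup {g : ℝ → ℝ} (hg : Continuous g) {t s : ℝ} (hs : s ∈ Icc (0:ℝ) t) :
    g s ≤ sSup (g '' Icc 0 t) :=
  le_csSup (bddAbove_image_Icc hg) (mem_image_of_mem g hs)

lemma runSup_le_runSup_add {g h : ℝ → ℝ} (hh : Continuous h) {t d : ℝ} (ht : 0 ≤ t)
    (hd : ∀ s ∈ Icc (0:ℝ) t, g s ≤ h s + d) :
    sSup (g '' Icc 0 t) ≤ sSup (h '' Icc 0 t) + d :=
  runSup_le ht fun s hs => (hd s hs).trans ((add_le_add_iff_right d).2 (le_runSup hh hs))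

lemma abs_runSup_sub_runSup_le {g h : ℝ → ℝ} (hg : Continuous g) (hh : Continuous h)
    {t d : ℝ} (ht : 0 ≤ t) (hd : ∀ s ∈ Icc (0:ℝ) t, |g s - h s| ≤ d) :
    |sSup (g '' Icc 0 t) - sSup (h '' Icc 0 t)| ≤ d := by
  rw [abs_sub_le_iff]
  constructor
  · have := runSup_le_runSup_add (g := g) hh ht
      (fun s hs => by have := abs_le.1 (hd s hs); linarith [this.2])
    linarith
  · have := runSup_le_runSup_add (g := h) hg ht
      (fun s hs => by have := abs_le.1 (hd s hs); linarith [this.1])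
    linarith

lemma continuousOn_runSup {g : ℝ → ℝ} (hg : Continuous g) {T : ℝ} (hT : 0 < T) :
    ContinuousOn (fun t => sSup (g '' Icc 0 t)) (Icc (0:ℝ) T) := by
  have hmono : ∀ a b : ℝ, 0 ≤ a → a ≤ b → sSup (g '' Icc 0 a) ≤ sSup (g '' Icc 0 b) :=
    fun a b ha hab => csSup_le_csSup (bddAbove_image_Icc hg)
      ((nonempty_Icc.2 ha).image g) (fun _ ⟨s, hs, e⟩ => ⟨s, Icc_subset_Icc le_rfl hab hs, e⟩)
  have hu := isCompact_Icc.uniformContinuousOn_of_continuous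
    (hg.continuousOn : ContinuousOn g (Icc (0:ℝ) T))
  rw [Metric.uniformContinuousOn_iff] at hu
  intro t ht
  rw [Metric.continuousWithinAt_iff]
  intro ε hε
  obtain ⟨δ, hδ0, hδ⟩ := hu (ε/2) (half_pos hε)
  have key : ∀ a b : ℝ, a ∈ Icc (0:ℝ) T → b ∈ Icc (0:ℝ) T → a ≤ b → |b - a| < δ →
      sSup (g '' Icc 0 b) ≤ sSup (g '' Icc 0 a) + ε/2 := by
    intro a b ha hb hab hd
    refine runSup_le (ha.1.trans hab) ?_
    intro s hs
    have hga : g a ≤ sSup (g '' Icc 0 a) := le_runSup hg ⟨ha.1, le_rfl⟩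
    rcases le_or_gt s a with hsa | hsa
    · have : g s ≤ sSup (g '' Icc 0 a) := le_runSup hg ⟨hs.1, hsa⟩
      linarith [half_pos hε]
    · have hsT : s ∈ Icc (0:ℝ) T := ⟨hs.1, hs.2.trans hb.2⟩
      have hdist : dist s a < δ := by
        rw [Real.dist_eq, abs_of_nonneg (by linarith : (0:ℝ) ≤ s - a)]
        rw [abs_of_nonneg (by linarith : (0:ℝ) ≤ b - a)] at hd
        linarith [hs.2]
      have := (abs_lt.1 (by rw [← Real.dist_eq]; exact hδ s hsT a ha hdist)).2
      linarith
  refine ⟨δ, hδ0, fun t' ht' hd => ?_⟩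
  rw [Real.dist_eq] at hd ⊢
  have hhalf : ε/2 < ε := by linarith
  rcases le_total t' t with h | h
  · have h1 := key t' t ht' ht h (by rw [abs_sub_comm] at hd; exact hd)
    have h2 := hmono t' t ht'.1 h
    have : |sSup (g '' Icc 0 t') - sSup (g '' Icc 0 t)| ≤ ε/2 := by
      rw [abs_le]; constructor <;> linarith
    linarith [this]
  · have h1 := key t t' ht ht' h hd
    have h2 := hmono t t' ht.1 h
    have : |sSup (g '' Icc 0 t') - sSup (g '' Icc 0 t)| ≤ ε/2 := by
      rw [abs_le]; constructor <;> linarith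
    linarith [this]

end CoupledMaxAux

namespace Stage2

open CoupledMaxAux

variable {T c₀ : ℝ}

/-- running max of the clamped square -/
noncomputable def Msup (c₀ : ℝ) (g : ℝ → ℝ) (t : ℝ) : ℝ :=
  sSup ((fun s => cl c₀ (g s) ^ 2) '' Icc 0 t)

lemma contOn_Msup {g : ℝ → ℝ} (hg : Continuous g) {c₀ : ℝ} (hT : 0 < T) :
    ContinuousOn (Msup c₀ g) (Icc (0:ℝ) T) :=
  continuousOn_runSup (((continuous_cl c₀).comp hg).pow 2) hT

lemma abs_Msup_le (hc₀ : 0 ≤ c₀) (g : ℝ → ℝ) (t : ℝ) : |Msup c₀ g t| ≤ c₀ ^ 2 := by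
  rcases le_or_gt 0 t with ht | ht
  · have h1 : Msup c₀ g t ≤ c₀ ^ 2 := runSup_le ht fun s _ => by
      have := abs_le.1 (abs_cl_le hc₀ (g s))
      show cl c₀ (g s) ^ 2 ≤ c₀ ^ 2
      nlinarith
    have h2 : 0 ≤ Msup c₀ g t := by
      refine le_trans (sq_nonneg (cl c₀ (g 0))) (le_csSup ?_ (mem_image_of_mem _ ⟨le_rfl, ht⟩))
      exact ⟨c₀ ^ 2, by rintro x ⟨s, _, rfl⟩; have := abs_le.1 (abs_cl_le hc₀ (g s)); show cl c₀ (g s) ^ 2 ≤ c₀ ^ 2; nlinarith⟩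
    rw [abs_of_nonneg h2]; exact h1
  · simp [Msup, Icc_eq_empty (not_le.2 ht), Real.sSup_empty]
    positivity

lemma abs_Msup_sub_le (hc₀ : 0 ≤ c₀) {g h : ℝ → ℝ} (hg : Continuous g) (hh : Continuous h)
    {t d : ℝ} (ht : 0 ≤ t) (hd : ∀ s ∈ Icc (0:ℝ) t, |g s - h s| ≤ d) :
    |Msup c₀ g t - Msup c₀ h t| ≤ 2 * c₀ * d :=
  abs_runSup_sub_runSup_le (((continuous_cl c₀).comp hg).pow 2)
    (((continuous_cl c₀).comp hh).pow 2) ht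
    (fun s hs => (abs_cl_sq_sub_cl_sq hc₀ _ _).trans
      (mul_le_mul_of_nonneg_left (hd s hs) (by linarith)))

/-- the integrand of the Picard operator -/
noncomputable def PP (c₀ T : ℝ) (hT : (0:ℝ) ≤ T) (f : C(Icc (0:ℝ) T, ℝ × ℝ)) (s : ℝ) : ℝ × ℝ :=
  ((f (projIcc 0 T hT s)).1 - Msup c₀ (fun σ => (f (projIcc 0 T hT σ)).2) s,
   (f (projIcc 0 T hT s)).2 - Msup c₀ (fun σ => (f (projIcc 0 T hT σ)).1) s)

lemma cont_comp1 (hT : (0:ℝ) ≤ T) (f : C(Icc (0:ℝ) T, ℝ × ℝ)) :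
    Continuous fun σ => (f (projIcc 0 T hT σ)).1 :=
  (f.continuous.comp continuous_projIcc).fst

lemma cont_comp2 (hT : (0:ℝ) ≤ T) (f : C(Icc (0:ℝ) T, ℝ × ℝ)) :
    Continuous fun σ => (f (projIcc 0 T hT σ)).2 :=
  (f.continuous.comp continuous_projIcc).snd

lemma contOn_PP1 (hT : 0 < T) (f : C(Icc (0:ℝ) T, ℝ × ℝ)) :
    ContinuousOn (fun s => (PP c₀ T hT.le f s).1) (Icc (0:ℝ) T) :=
  ((cont_comp1 hT.le f).continuousOn).sub (contOn_Msup (cont_comp2 hT.le f) hT)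

lemma contOn_PP2 (hT : 0 < T) (f : C(Icc (0:ℝ) T, ℝ × ℝ)) :
    ContinuousOn (fun s => (PP c₀ T hT.le f s).2) (Icc (0:ℝ) T) :=
  ((cont_comp2 hT.le f).continuousOn).sub (contOn_Msup (cont_comp1 hT.le f) hT)

lemma abs_PP1_le (hc₀ : 0 ≤ c₀) (hT : (0:ℝ) ≤ T) (f : C(Icc (0:ℝ) T, ℝ × ℝ)) (s : ℝ) :
    |(PP c₀ T hT f s).1| ≤ ‖f‖ + c₀ ^ 2 := by
  refine (abs_sub _ _).trans ?_
  have h1 : |(f (projIcc 0 T hT s)).1| ≤ ‖f‖ := by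
    rw [← Real.norm_eq_abs]
    exact (norm_fst_le _).trans (f.norm_coe_le_norm _)
  have h2 := abs_Msup_le hc₀ (fun σ => (f (projIcc 0 T hT σ)).2) s
  linarith

lemma abs_PP2_le (hc₀ : 0 ≤ c₀) (hT : (0:ℝ) ≤ T) (f : C(Icc (0:ℝ) T, ℝ × ℝ)) (s : ℝ) :
    |(PP c₀ T hT f s).2| ≤ ‖f‖ + c₀ ^ 2 := by
  refine (abs_sub _ _).trans ?_
  have h1 : |(f (projIcc 0 T hT s)).2| ≤ ‖f‖ := by
    rw [← Real.norm_eq_abs]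
    exact (norm_snd_le _).trans (f.norm_coe_le_norm _)
  have h2 := abs_Msup_le hc₀ (fun σ => (f (projIcc 0 T hT σ)).1) s
  linarith

lemma intInt_PP1 (hT : 0 < T) (f : C(Icc (0:ℝ) T, ℝ × ℝ)) {a b : ℝ}
    (ha : a ∈ Icc (0:ℝ) T) (hb : b ∈ Icc (0:ℝ) T) :
    IntervalIntegrable (fun s => (PP c₀ T hT.le f s).1) volume a b :=
  ((contOn_PP1 hT f).mono (uIcc_subset_Icc ha hb)).intervalIntegrable

lemma intInt_PP2 (hT : 0 < T) (f : C(Icc (0:ℝ) T, ℝ × ℝ)) {a b : ℝ}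
    (ha : a ∈ Icc (0:ℝ) T) (hb : b ∈ Icc (0:ℝ) T) :
    IntervalIntegrable (fun s => (PP c₀ T hT.le f s).2) volume a b :=
  ((contOn_PP2 hT f).mono (uIcc_subset_Icc ha hb)).intervalIntegrable

/-- the Picard operator -/
noncomputable def Phi (c₀ : ℝ) {T : ℝ} (x₀ y₀ : ℝ) (hT : 0 < T) (f : C(Icc (0:ℝ) T, ℝ × ℝ)) :
    C(Icc (0:ℝ) T, ℝ × ℝ) where
  toFun t := (x₀ + ∫ s in (0:ℝ)..(t:ℝ), (PP c₀ T hT.le f s).1,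
              y₀ + ∫ s in (0:ℝ)..(t:ℝ), (PP c₀ T hT.le f s).2)
  continuous_toFun := by
    have h0 : (0:ℝ) ∈ uIcc (0:ℝ) T := by
      rw [uIcc_of_le hT.le]; exact ⟨le_rfl, hT.le⟩
    have c1 : ContinuousOn (fun u => ∫ s in (0:ℝ)..u, (PP c₀ T hT.le f s).1) (Icc (0:ℝ) T) := by
      have := continuousOn_primitive_interval'
        (μ := volume) (intInt_PP1 (c₀ := c₀) hT f ⟨le_rfl, hT.le⟩ (right_mem_Icc.2 hT.le)) h0
      rwa [uIcc_of_le hT.le] at this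
    have c2 : ContinuousOn (fun u => ∫ s in (0:ℝ)..u, (PP c₀ T hT.le f s).2) (Icc (0:ℝ) T) := by
      have := continuousOn_primitive_interval'
        (μ := volume) (intInt_PP2 (c₀ := c₀) hT f ⟨le_rfl, hT.le⟩ (right_mem_Icc.2 hT.le)) h0
      rwa [uIcc_of_le hT.le] at this
    refine Continuous.prodMk ?_ ?_
    · exact continuous_const.add (c1.comp_continuous continuous_subtype_val fun t => t.2)
    · exact continuous_const.add (c2.comp_continuous continuous_subtype_val fun t => t.2)

lemma Phi_apply (hT : 0 < T) (x₀ y₀ : ℝ) (f : C(Icc (0:ℝ) T, ℝ × ℝ)) (t : Icc (0:ℝ) T) :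
    Phi c₀ x₀ y₀ hT f t = (x₀ + ∫ s in (0:ℝ)..(t:ℝ), (PP c₀ T hT.le f s).1,
                           y₀ + ∫ s in (0:ℝ)..(t:ℝ), (PP c₀ T hT.le f s).2) := rfl

lemma dist_comp1_le (hT : (0:ℝ) ≤ T) (f g : C(Icc (0:ℝ) T, ℝ × ℝ)) (p : Icc (0:ℝ) T) :
    |(f p).1 - (g p).1| ≤ dist (f p) (g p) := by
  rw [Prod.dist_eq]
  exact le_trans (le_of_eq (Real.dist_eq _ _).symm) (le_max_left _ _)

lemma dist_comp2_le (hT : (0:ℝ) ≤ T) (f g : C(Icc (0:ℝ) T, ℝ × ℝ)) (p : Icc (0:ℝ) T) :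
    |(f p).2 - (g p).2| ≤ dist (f p) (g p) := by
  rw [Prod.dist_eq]
  exact le_trans (le_of_eq (Real.dist_eq _ _).symm) (le_max_right _ _)

lemma abs_PP1_sub_le (hc₀ : 0 ≤ c₀) (hT : 0 < T) (f g : C(Icc (0:ℝ) T, ℝ × ℝ))
    {τ B : ℝ} (hτ : τ ∈ Icc (0:ℝ) T)
    (hB : ∀ σ ∈ Icc (0:ℝ) τ, dist (f (projIcc 0 T hT.le σ)) (g (projIcc 0 T hT.le σ)) ≤ B) :
    |(PP c₀ T hT.le f τ).1 - (PP c₀ T hT.le g τ).1| ≤ (1 + 2*c₀) * B := by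
  have h1 : |(f (projIcc 0 T hT.le τ)).1 - (g (projIcc 0 T hT.le τ)).1| ≤ B :=
    (dist_comp1_le hT.le f g _).trans (hB τ ⟨hτ.1, le_rfl⟩)
  have h2 : |Msup c₀ (fun σ => (f (projIcc 0 T hT.le σ)).2) τ -
             Msup c₀ (fun σ => (g (projIcc 0 T hT.le σ)).2) τ| ≤ 2*c₀*B := by
    refine abs_Msup_sub_le hc₀ (cont_comp2 hT.le f) (cont_comp2 hT.le g) hτ.1 ?_
    exact fun σ hσ => (dist_comp2_le hT.le f g _).trans (hB σ hσ)
  have he : (PP c₀ T hT.le f τ).1 - (PP c₀ T hT.le g τ).1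
      = ((f (projIcc 0 T hT.le τ)).1 - (g (projIcc 0 T hT.le τ)).1)
        - (Msup c₀ (fun σ => (f (projIcc 0 T hT.le σ)).2) τ -
           Msup c₀ (fun σ => (g (projIcc 0 T hT.le σ)).2) τ) := by
    simp only [PP]; ring
  rw [he]
  refine (abs_sub _ _).trans ?_
  have : (1 + 2*c₀) * B = B + 2*c₀*B := by ring
  linarith

lemma abs_PP2_sub_le (hc₀ : 0 ≤ c₀) (hT : 0 < T) (f g : C(Icc (0:ℝ) T, ℝ × ℝ))
    {τ B : ℝ} (hτ : τ ∈ Icc (0:ℝ) T)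
    (hB : ∀ σ ∈ Icc (0:ℝ) τ, dist (f (projIcc 0 T hT.le σ)) (g (projIcc 0 T hT.le σ)) ≤ B) :
    |(PP c₀ T hT.le f τ).2 - (PP c₀ T hT.le g τ).2| ≤ (1 + 2*c₀) * B := by
  have h1 : |(f (projIcc 0 T hT.le τ)).2 - (g (projIcc 0 T hT.le τ)).2| ≤ B :=
    (dist_comp2_le hT.le f g _).trans (hB τ ⟨hτ.1, le_rfl⟩)
  have h2 : |Msup c₀ (fun σ => (f (projIcc 0 T hT.le σ)).1) τ -
             Msup c₀ (fun σ => (g (projIcc 0 T hT.le σ)).1) τ| ≤ 2*c₀*B := by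
    refine abs_Msup_sub_le hc₀ (cont_comp1 hT.le f) (cont_comp1 hT.le g) hτ.1 ?_
    exact fun σ hσ => (dist_comp1_le hT.le f g _).trans (hB σ hσ)
  have he : (PP c₀ T hT.le f τ).2 - (PP c₀ T hT.le g τ).2
      = ((f (projIcc 0 T hT.le τ)).2 - (g (projIcc 0 T hT.le τ)).2)
        - (Msup c₀ (fun σ => (f (projIcc 0 T hT.le σ)).1) τ -
           Msup c₀ (fun σ => (g (projIcc 0 T hT.le σ)).1) τ) := by
    simp only [PP]; ring
  rw [he]
  refine (abs_sub _ _).trans ?_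
  have : (1 + 2*c₀) * B = B + 2*c₀*B := by ring
  linarith

lemma dist_Phi_le (hc₀ : 0 ≤ c₀) (hT : 0 < T) (x₀ y₀ : ℝ) {f g : C(Icc (0:ℝ) T, ℝ × ℝ)}
    {n : ℕ} {D : ℝ} (hD : 0 ≤ D)
    (h : ∀ t : Icc (0:ℝ) T, dist (f t) (g t) ≤ ((1+2*c₀) * |(t:ℝ)|) ^ n / n ! * D)
    (t : Icc (0:ℝ) T) :
    dist (Phi c₀ x₀ y₀ hT f t) (Phi c₀ x₀ y₀ hT g t)
      ≤ ((1+2*c₀) * |(t:ℝ)|) ^ (n+1) / (n+1)! * D := by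
  set L : ℝ := 1 + 2*c₀ with hLdef
  have hL : 0 ≤ L := by positivity
  have ht0 : (0:ℝ) ≤ (t:ℝ) := t.2.1
  -- pointwise bound on the integrand difference
  have key : ∀ i : Bool, ∀ τ ∈ Ι (0:ℝ) (t:ℝ),
      ‖(if i then (PP c₀ T hT.le f τ).1 - (PP c₀ T hT.le g τ).1
        else (PP c₀ T hT.le f τ).2 - (PP c₀ T hT.le g τ).2)‖
        ≤ L * ((L * |τ - 0|) ^ n / n ! * D) := by
    intro i τ hτ
    rw [uIoc_of_le ht0] at hτ
    have hτIcc : τ ∈ Icc (0:ℝ) T := ⟨hτ.1.le, hτ.2.trans t.2.2⟩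
    have hB : ∀ σ ∈ Icc (0:ℝ) τ, dist (f (projIcc 0 T hT.le σ)) (g (projIcc 0 T hT.le σ))
        ≤ (L * |τ|) ^ n / n ! * D := by
      intro σ hσ
      have hσIcc : σ ∈ Icc (0:ℝ) T := ⟨hσ.1, hσ.2.trans hτIcc.2⟩
      rw [projIcc_of_mem hT.le hσIcc]
      have h' := h ⟨σ, hσIcc⟩
      refine h'.trans ?_
      have habs : |σ| ≤ |τ| := by
        rw [abs_of_nonneg hσ.1, abs_of_nonneg hτ.1.le]; exact hσ.2
      gcongr
    have hmain : |(if i then (PP c₀ T hT.le f τ).1 - (PP c₀ T hT.le g τ).1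
        else (PP c₀ T hT.le f τ).2 - (PP c₀ T hT.le g τ).2)| ≤ L * ((L * |τ|) ^ n / n ! * D) := by
      cases i
      · simpa using abs_PP2_sub_le hc₀ hT f g hτIcc hB
      · simpa using abs_PP1_sub_le hc₀ hT f g hτIcc hB
    rw [Real.norm_eq_abs, sub_zero]
    exact hmain
  have intbound : ∀ (z₀ : ℝ) (F₁ F₂ : ℝ → ℝ), IntervalIntegrable F₁ volume 0 (t:ℝ) →
      IntervalIntegrable F₂ volume 0 (t:ℝ) →
      (∀ τ ∈ Ι (0:ℝ) (t:ℝ), ‖F₁ τ - F₂ τ‖ ≤ L * ((L * |τ - 0|) ^ n / n ! * D)) →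
      dist (z₀ + ∫ s in (0:ℝ)..(t:ℝ), F₁ s) (z₀ + ∫ s in (0:ℝ)..(t:ℝ), F₂ s)
        ≤ (L * |(t:ℝ)|) ^ (n+1) / (n+1)! * D := by
    intro z₀ F₁ F₂ hi1 hi2 hb
    rw [dist_eq_norm, add_sub_add_left_eq_sub, ← integral_sub hi1 hi2,
      norm_integral_eq_norm_integral_uIoc]
    calc ‖∫ τ in Ι (0:ℝ) (t:ℝ), (F₁ τ - F₂ τ)‖
        ≤ ∫ τ in Ι (0:ℝ) (t:ℝ), L * ((L * |τ - 0|) ^ n / n ! * D) := by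
          refine MeasureTheory.norm_integral_le_of_norm_le
            (Continuous.integrableOn_uIoc (by fun_prop)) ?_
          exact (MeasureTheory.ae_restrict_mem measurableSet_Ioc).mono fun τ hτ => hb τ hτ
      _ = (L * |(t:ℝ) - 0|) ^ (n+1) / (n+1)! * D := by
          simp_rw [mul_pow, div_eq_mul_inv, mul_assoc, MeasureTheory.integral_const_mul,
            MeasureTheory.integral_mul_const, integral_pow_abs_sub_uIoc,
            div_eq_mul_inv, pow_succ' (L : ℝ), Nat.factorial_succ, Nat.cast_mul,
            Nat.cast_succ, mul_inv, mul_assoc]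
      _ = (L * |(t:ℝ)|) ^ (n+1) / (n+1)! * D := by rw [sub_zero]
  rw [Phi_apply, Phi_apply, Prod.dist_eq]
  refine max_le ?_ ?_
  · exact intbound x₀ _ _ (intInt_PP1 hT f ⟨le_rfl, hT.le⟩ t.2)
      (intInt_PP1 hT g ⟨le_rfl, hT.le⟩ t.2) (fun τ hτ => by simpa using key true τ hτ)
  · exact intbound y₀ _ _ (intInt_PP2 hT f ⟨le_rfl, hT.le⟩ t.2)
      (intInt_PP2 hT g ⟨le_rfl, hT.le⟩ t.2) (fun τ hτ => by simpa using key false τ hτ)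



lemma dist_iterate_Phi_le (hc₀ : 0 ≤ c₀) (hT : 0 < T) (x₀ y₀ : ℝ)
    (f g : C(Icc (0:ℝ) T, ℝ × ℝ)) (n : ℕ) (t : Icc (0:ℝ) T) :
    dist ((Phi c₀ x₀ y₀ hT)^[n] f t) ((Phi c₀ x₀ y₀ hT)^[n] g t)
      ≤ ((1+2*c₀) * |(t:ℝ)|) ^ n / n ! * dist f g := by
  induction n generalizing t with
  | zero => simpa using ContinuousMap.dist_apply_le_dist t
  | succ n ih =>
    rw [iterate_succ_apply', iterate_succ_apply']
    exact dist_Phi_le hc₀ hT x₀ y₀ dist_nonneg (fun t => ih t) t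

lemma dist_iterate_Phi_le' (hc₀ : 0 ≤ c₀) (hT : 0 < T) (x₀ y₀ : ℝ)
    (f g : C(Icc (0:ℝ) T, ℝ × ℝ)) (n : ℕ) :
    dist ((Phi c₀ x₀ y₀ hT)^[n] f) ((Phi c₀ x₀ y₀ hT)^[n] g)
      ≤ ((1+2*c₀) * T) ^ n / n ! * dist f g := by
  haveI : Nonempty (Icc (0:ℝ) T) := ⟨⟨0, le_rfl, hT.le⟩⟩
  rw [ContinuousMap.dist_le_iff_of_nonempty]
  intro t
  refine (dist_iterate_Phi_le hc₀ hT x₀ y₀ f g n t).trans ?_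
  have h1 : (0:ℝ) ≤ 1 + 2*c₀ := by linarith
  have h2 : |(t:ℝ)| ≤ T := by rw [abs_of_nonneg t.2.1]; exact t.2.2
  gcongr

lemma exists_fixed (hc₀ : 0 ≤ c₀) (hT : 0 < T) (x₀ y₀ : ℝ) :
    ∃ F : C(Icc (0:ℝ) T, ℝ × ℝ), Phi c₀ x₀ y₀ hT F = F := by
  haveI : Nonempty (Icc (0:ℝ) T) := ⟨⟨0, le_rfl, hT.le⟩⟩
  haveI : Nonempty C(Icc (0:ℝ) T, ℝ × ℝ) := ⟨ContinuousMap.const _ (0, 0)⟩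
  obtain ⟨N, hN⟩ := ((FloorSemiring.tendsto_pow_div_factorial_atTop ((1+2*c₀)*T)).eventually
    (gt_mem_nhds zero_lt_one)).exists
  have h0 : (0:ℝ) ≤ ((1+2*c₀)*T)^N / N ! := by positivity
  have hK : ContractingWith ⟨_, h0⟩ ((Phi c₀ x₀ y₀ hT)^[N]) :=
    ⟨hN, LipschitzWith.of_dist_le_mul fun f g => dist_iterate_Phi_le' hc₀ hT x₀ y₀ f g N⟩
  exact ⟨_, hK.isFixedPt_fixedPoint_iterate⟩

lemma norm_fixed_le (hc₀ : 0 < c₀) (hT : 0 < T) {x₀ y₀ : ℝ}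
    (h3 : |x₀| + c₀ * T + c₀ ^ 2 * T ≤ c₀) (h4 : |y₀| + c₀ * T + c₀ ^ 2 * T ≤ c₀)
    {F : C(Icc (0:ℝ) T, ℝ × ℝ)} (hF : Phi c₀ x₀ y₀ hT F = F) : ‖F‖ ≤ c₀ := by
  have hT1 : T < 1 := by nlinarith [abs_nonneg x₀, mul_pos (pow_pos hc₀ 2) hT]
  have hC : (0:ℝ) ≤ ‖F‖ + c₀^2 := by positivity
  have hpt : ∀ t : Icc (0:ℝ) T, ‖F t‖ ≤ max |x₀| |y₀| + (‖F‖ + c₀^2) * T := by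
    intro t
    conv_lhs => rw [← hF]
    rw [Phi_apply, Prod.norm_def]
    have hb1 : ‖∫ s in (0:ℝ)..(t:ℝ), (PP c₀ T hT.le F s).1‖ ≤ (‖F‖ + c₀^2) * T := by
      refine (norm_integral_le_of_norm_le_const
        (fun s _ => by rw [Real.norm_eq_abs]; exact abs_PP1_le hc₀.le hT.le F s)).trans ?_
      rw [sub_zero, abs_of_nonneg t.2.1]
      exact mul_le_mul_of_nonneg_left t.2.2 hC
    have hb2 : ‖∫ s in (0:ℝ)..(t:ℝ), (PP c₀ T hT.le F s).2‖ ≤ (‖F‖ + c₀^2) * T := by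
      refine (norm_integral_le_of_norm_le_const
        (fun s _ => by rw [Real.norm_eq_abs]; exact abs_PP2_le hc₀.le hT.le F s)).trans ?_
      rw [sub_zero, abs_of_nonneg t.2.1]
      exact mul_le_mul_of_nonneg_left t.2.2 hC
    refine max_le ?_ ?_
    · rw [Real.norm_eq_abs]
      refine (abs_add_le _ _).trans ?_
      have := le_max_left |x₀| |y₀|
      rw [Real.norm_eq_abs] at hb1
      linarith
    · rw [Real.norm_eq_abs]
      refine (abs_add_le _ _).trans ?_
      have := le_max_right |x₀| |y₀|
      rw [Real.norm_eq_abs] at hb2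
      linarith
  have hn : ‖F‖ ≤ max |x₀| |y₀| + (‖F‖ + c₀^2) * T := by
    refine (ContinuousMap.norm_le _ ?_).2 hpt
    positivity
  have hm : max |x₀| |y₀| ≤ c₀ - c₀*T - c₀^2*T := max_le (by linarith) (by linarith)
  have h5 : ‖F‖ * (1 - T) ≤ c₀ * (1 - T) := by nlinarith
  exact le_of_mul_le_mul_right h5 (by linarith)

theorem main (x₀ y₀ T c₀ : ℝ) (hT : 0 < T) (hc₀ : 0 < c₀)
    (h3 : |x₀| + c₀ * T + c₀ ^ 2 * T ≤ c₀) (h4 : |y₀| + c₀ * T + c₀ ^ 2 * T ≤ c₀) :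
    ∃ x y : ℝ → ℝ, x 0 = x₀ ∧ y 0 = y₀ ∧
      ∀ t ∈ Set.Icc (0:ℝ) T,
        HasDerivWithinAt x (x t - sSup ((fun s => (y s) ^ 2) '' Set.Icc 0 t)) (Set.Icc 0 T) t ∧
        HasDerivWithinAt y (y t - sSup ((fun s => (x s) ^ 2) '' Set.Icc 0 t)) (Set.Icc 0 T) t := by
  obtain ⟨F, hF⟩ := exists_fixed hc₀.le hT x₀ y₀
  have hFn := norm_fixed_le hc₀ hT h3 h4 hF
  set π : ℝ → Icc (0:ℝ) T := projIcc (0:ℝ) T hT.le with hπ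
  have habs1 : ∀ s : ℝ, |(F (π s)).1| ≤ c₀ := fun s => by
    have h0 := F.norm_coe_le_norm (π s)
    have h2 := norm_fst_le (F (π s))
    rw [Real.norm_eq_abs] at h2
    linarith
  have habs2 : ∀ s : ℝ, |(F (π s)).2| ≤ c₀ := fun s => by
    have h0 := F.norm_coe_le_norm (π s)
    have h2 := norm_snd_le (F (π s))
    rw [Real.norm_eq_abs] at h2
    linarith
  have hq1 : (fun s : ℝ => ((F (π s)).1)^2) = (fun s => cl c₀ ((F (π s)).1) ^ 2) :=
    funext fun s => by rw [cl_eq_of_abs_le (habs1 s)]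
  have hq2 : (fun s : ℝ => ((F (π s)).2)^2) = (fun s => cl c₀ ((F (π s)).2) ^ 2) :=
    funext fun s => by rw [cl_eq_of_abs_le (habs2 s)]
  have hπ0 : π 0 = ⟨0, ⟨le_rfl, hT.le⟩⟩ := projIcc_of_mem hT.le ⟨le_rfl, hT.le⟩
  refine ⟨fun s => (F (π s)).1, fun s => (F (π s)).2, ?_, ?_, ?_⟩
  · show (F (π 0)).1 = x₀
    conv_lhs => rw [← hF]
    rw [Phi_apply]
    simp [hπ0]
  · show (F (π 0)).2 = y₀
    conv_lhs => rw [← hF]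
    rw [Phi_apply]
    simp [hπ0]
  · intro t ht
    haveI : Fact (t ∈ Icc (0:ℝ) T) := ⟨ht⟩
    have hπt : π t = ⟨t, ht⟩ := projIcc_of_mem hT.le ht
    constructor
    · have hDer1 : HasDerivWithinAt (fun τ : ℝ => x₀ + ∫ s in (0:ℝ)..τ, (PP c₀ T hT.le F s).1)
          ((PP c₀ T hT.le F t).1) (Icc 0 T) t :=
        (integral_hasDerivWithinAt_right (intInt_PP1 hT F ⟨le_rfl, hT.le⟩ ht)
          ((contOn_PP1 hT F).stronglyMeasurableAtFilter_nhdsWithin measurableSet_Icc t)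
          ((contOn_PP1 hT F) t ht)).const_add x₀
      have heq : (fun τ : ℝ => (F (π τ)).1)
          =ᶠ[𝓝[Icc (0:ℝ) T] t] fun τ => x₀ + ∫ s in (0:ℝ)..τ, (PP c₀ T hT.le F s).1 := by
        filter_upwards [self_mem_nhdsWithin] with τ hτ
        conv_lhs => rw [← hF]
        rw [Phi_apply]
        simp [hπ, projIcc_of_mem hT.le hτ]
      have hD := hDer1.congr_of_eventuallyEq_of_mem heq ht
      have hval : (x₀ + ∫ s in (0:ℝ)..(t:ℝ), 0) = x₀ := by simp
      rw [hq2]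
      have hPP : (PP c₀ T hT.le F t).1
          = (F (π t)).1 - sSup ((fun s => cl c₀ ((F (π s)).2) ^ 2) '' Icc 0 t) := rfl
      rw [← hPP]
      exact hD
    · have hDer2 : HasDerivWithinAt (fun τ : ℝ => y₀ + ∫ s in (0:ℝ)..τ, (PP c₀ T hT.le F s).2)
          ((PP c₀ T hT.le F t).2) (Icc 0 T) t :=
        (integral_hasDerivWithinAt_right (intInt_PP2 hT F ⟨le_rfl, hT.le⟩ ht)
          ((contOn_PP2 hT F).stronglyMeasurableAtFilter_nhdsWithin measurableSet_Icc t)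
          ((contOn_PP2 hT F) t ht)).const_add y₀
      have heq : (fun τ : ℝ => (F (π τ)).2)
          =ᶠ[𝓝[Icc (0:ℝ) T] t] fun τ => y₀ + ∫ s in (0:ℝ)..τ, (PP c₀ T hT.le F s).2 := by
        filter_upwards [self_mem_nhdsWithin] with τ hτ
        conv_lhs => rw [← hF]
        rw [Phi_apply]
        simp [hπ, projIcc_of_mem hT.le hτ]
      have hD := hDer2.congr_of_eventuallyEq_of_mem heq ht
      rw [hq1]
      have hPP : (PP c₀ T hT.le F t).2
          = (F (π t)).2 - sSup ((fun s => cl c₀ ((F (π s)).1) ^ 2) '' Icc 0 t) := rfl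
      rw [← hPP]
      exact hD

end Stage2


end

/-- Existence on `[0,T]` for the coupled system with maxima of squares
`ẋ = x − max_{[0,t]} y²`, `ẏ = y − max_{[0,t]} x²`, with `x(0) = x₀ > 0`, `y(0) = y₀ > 0`,
under the stated smallness conditions on `T` and `c₀`. -/
theorem exists_solution_coupled_square_system_with_maxima (x₀ y₀ T c₀ : ℝ)
    (hx₀ : 0 < x₀) (hy₀ : 0 < y₀) (hT : 0 < T) (hc₀ : 0 < c₀)
    (h1 : |x₀| + |x₀ - y₀ ^ 2| * T ≤ c₀) (h2 : |y₀| + |y₀ - x₀ ^ 2| * T ≤ c₀)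
    (h3 : |x₀| + c₀ * T + c₀ ^ 2 * T ≤ c₀) (h4 : |y₀| + c₀ * T + c₀ ^ 2 * T ≤ c₀) :
    ∃ x y : ℝ → ℝ, x 0 = x₀ ∧ y 0 = y₀ ∧
      ∀ t ∈ Set.Icc (0:ℝ) T,
        HasDerivWithinAt x (x t - sSup ((fun s => (y s) ^ 2) '' Set.Icc 0 t)) (Set.Icc 0 T) t ∧
        HasDerivWithinAt y (y t - sSup ((fun s => (x s) ^ 2) '' Set.Icc 0 t)) (Set.Icc 0 T) t :=
  Stage2.main x₀ y₀ T c₀ hT hc₀ h3 h4
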